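/- arXiv:1903.01827 — 2 statements merged into one kernel-verified Lean document; each statement's English description precedes it below -/
import Mathlib

section
/- Let ξ ∈ 𝕌ⁿ with Re(ξ) = 0 and g ∈ ℂ. Then the fundamental Whittaker function has plane-wave asymptotics: for every ε > 0 there exists R > 0 such that for all x ∈ ℝⁿ with x_k − x_{k+1} ≥ R for k = 1,…,n (with the convention x_{n+1} = 0), one has |φ_ξ(x;g) − e^{⟨ξ,x⟩}| < ε. -/
open scoped BigOperators
open Finset Filter Topology

noncomputable section

namespace TodaBC

variable {n : ℕ}

/-- The bilinear pairing `⟨ξ,x⟩ = ∑_j ξ_j x_j` on `ℂⁿ`. -/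
def pc (ξ x : Fin n → ℂ) : ℂ := ∑ j, ξ j * x j

/-- Complexification of an integer vector. -/
def zc (ν : Fin n → ℤ) : Fin n → ℂ := fun j => (ν j : ℂ)

/-- Complexification of a real vector. -/
def cr (x : Fin n → ℝ) : Fin n → ℂ := fun j => (x j : ℂ)

/-- `ρ = (n, n-1, …, 1)` as a complex vector (0-indexed: `ρ_j = n - j`). -/
def rhoC (n : ℕ) : Fin n → ℂ := fun j => ((n - (j : ℕ) : ℕ) : ℂ)

/-- `ρ = (n, n-1, …, 1)` as a real vector. -/
def rhoR (n : ℕ) : Fin n → ℝ := fun j => ((n - (j : ℕ) : ℕ) : ℝ)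

/-- `⟨ν,ρ⟩` for an integer vector `ν`. -/
def rp (ν : Fin n → ℤ) : ℤ := ∑ j, ν j * ((n : ℤ) - ((j : ℕ) : ℤ))

/-- `ν ≥ 0` : all initial partial sums of `ν` are nonnegative. -/
def dominant (ν : Fin n → ℤ) : Prop := ∀ k : Fin n, 0 ≤ ∑ j ∈ Finset.Iic k, ν j

/-- The domain `𝕌ⁿ = {ξ ∈ ℂⁿ ∣ ⟨ν-2ξ,ν⟩ ≠ 0 for all ν > 0}`. -/
def Uset (n : ℕ) : Set (Fin n → ℂ) :=
  {ξ | ∀ ν : Fin n → ℤ, dominant ν → ν ≠ 0 → pc (zc ν - 2 • ξ) (zc ν) ≠ 0}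

/-- Standard basis vector of `ℤⁿ` with (0-based) index `k`. -/
def eZ (n : ℕ) (k : ℕ) : Fin n → ℤ := fun i => if (i : ℕ) = k then 1 else 0

/-- RHS of the Toda Harish-Chandra recurrence: `∑_{α ∈ S} a_α a_{ν-α}`. -/
def todaRHS (g : ℂ) (a : (Fin n → ℤ) → ℂ) (ν : Fin n → ℤ) : ℂ :=
  (∑ k ∈ Finset.range (n - 1), 2 * a (ν - (eZ n k - eZ n (k + 1))))
    + g * a (ν - eZ n (n - 1)) + (1 / 4) * a (ν - 2 • eZ n (n - 1))

/-- `a` is the family of Harish-Chandra coefficients `ν ↦ a_ν(ξ;g)`. -/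
def IsHC (g : ℂ) (ξ : Fin n → ℂ) (a : (Fin n → ℤ) → ℂ) : Prop :=
  a 0 = 1 ∧ (∀ ν, ¬ dominant ν → a ν = 0) ∧
    ∀ ν, dominant ν → ν ≠ 0 →
      a ν = (pc (zc ν - 2 • ξ) (zc ν))⁻¹ * todaRHS g a ν

/-- Term of the Harish-Chandra series: `a_ν e^{⟨ξ-ν,x⟩}`. -/
def hcTerm (a : (Fin n → ℤ) → ℂ) (ξ x : Fin n → ℂ) (ν : Fin n → ℤ) : ℂ :=
  a ν * Complex.exp (pc (ξ - zc ν) x)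

/-- The Toda + Morse potential `∑_{α ∈ S} a_α e^{-⟨α,x⟩}`. -/
def potential (n : ℕ) (g : ℂ) (x : Fin n → ℂ) : ℂ :=
  (∑ k ∈ Finset.range (n - 1), 2 * Complex.exp (- pc (zc (eZ n k - eZ n (k + 1))) x))
    + g * Complex.exp (- pc (zc (eZ n (n - 1))) x)
    + (1 / 4) * Complex.exp (- pc (zc (2 • eZ n (n - 1))) x)

/-- `∂²f/∂x_j²` evaluated at `x`. -/
def secondPartial (f : (Fin n → ℂ) → ℂ) (j : Fin n) (x : Fin n → ℂ) : ℂ :=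
  iteratedDeriv 2 (fun s => f (Function.update x j s)) (x j)

/-- `ℂⁿ_{reg,+}`. -/
def regPlus (n : ℕ) : Set (Fin n → ℂ) :=
  {ξ | (∀ j, ∀ m : ℤ, 0 < m → 2 * ξ j ≠ (m : ℂ)) ∧
    ∀ j k : Fin n, j < k → ∀ m : ℤ, 0 < m → ξ j + ξ k ≠ (m : ℂ) ∧ ξ j - ξ k ≠ (m : ℂ)}

/-- `ℂⁿ_{reg}`. -/
def regSet (n : ℕ) : Set (Fin n → ℂ) :=
  {ξ | (∀ j, ∀ m : ℤ, 2 * ξ j ≠ (m : ℂ)) ∧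
    ∀ j k : Fin n, j < k → ∀ m : ℤ, ξ j + ξ k ≠ (m : ℂ) ∧ ξ j - ξ k ≠ (m : ℂ)}

/-- `ℂⁿ_{reg,-}`. -/
def regMinus (n : ℕ) : Set (Fin n → ℂ) :=
  {ξ | (∀ j, ∀ m : ℤ, m ≤ 0 → 2 * ξ j ≠ (m : ℂ)) ∧
    ∀ j k : Fin n, j < k → ∀ m : ℤ, m ≤ 0 → ξ j + ξ k ≠ (m : ℂ) ∧ ξ j - ξ k ≠ (m : ℂ)}

/-- The condition `x_k - x_{k+1} ≥ R` for `k = 1,…,n` (with `x_{n+1} = 0`). -/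
def spaced (n : ℕ) (R : ℝ) (x : Fin n → ℝ) : Prop :=
  ∀ k : Fin n, (if h : (k : ℕ) + 1 < n then x ⟨(k : ℕ) + 1, h⟩ else 0) + R ≤ x k

/-- The Toda `c`-function `C(ξ;g)`. -/
def Cfun (g : ℂ) (ξ : Fin n → ℂ) : ℂ :=
  (∏ j, Complex.Gamma (2 * ξ j) / Complex.Gamma (1 / 2 + g + ξ j)) *
    ∏ j, ∏ k ∈ Finset.Ioi j, Complex.Gamma (ξ j + ξ k) * Complex.Gamma (ξ j - ξ k)

/-- Action of the signed permutation `(σ,ε)` on `ℂⁿ`: `(wξ)_j = ε_j ξ_{σ_j}`. -/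
def wAct (σ : Equiv.Perm (Fin n)) (ε : Fin n → Bool) (ξ : Fin n → ℂ) : Fin n → ℂ :=
  fun j => (if ε j then 1 else -1) * ξ (σ j)

/-- The hyperoctahedral Whittaker function `Φ_ξ(x;g) = ∑_{w ∈ W} C(wξ;g) φ_{wξ}(x;g)`,
built from an extension `F` of the fundamental Whittaker function. -/
def PhiOf (F : (Fin n → ℂ) → (Fin n → ℂ) → ℂ → ℂ) (g : ℂ) (ξ x : Fin n → ℂ) : ℂ :=
  ∑ σ : Equiv.Perm (Fin n), ∑ ε : Fin n → Bool,
    Cfun g (wAct σ ε ξ) * F (wAct σ ε ξ) x g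

/-- `F` is the holomorphic extension, to `ℂⁿ_{reg,+} × ℂⁿ × ℂ`, of the fundamental Whittaker
function attached to the coefficient family `a`. -/
def IsPhiExt (n : ℕ) (a : (Fin n → ℂ) → ℂ → (Fin n → ℤ) → ℂ)
    (F : (Fin n → ℂ) → (Fin n → ℂ) → ℂ → ℂ) : Prop :=
  DifferentiableOn ℂ (fun p : (Fin n → ℂ) × (Fin n → ℂ) × ℂ => F p.1 p.2.1 p.2.2)
      ((regPlus n) ×ˢ (Set.univ : Set (Fin n → ℂ)) ×ˢ (Set.univ : Set ℂ)) ∧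
    ∀ ξ ∈ Uset n ∩ regPlus n, ∀ x : Fin n → ℂ, ∀ g : ℂ,
      HasSum (fun ν : Fin n → ℤ => hcTerm (a ξ g) ξ x ν) (F ξ x g)

/-- Sign vector with value `+1` on `P`, `-1` on `M`, `0` elsewhere. -/
def es (P M : Finset (Fin n)) (j : Fin n) : ℂ :=
  if j ∈ P then 1 else if j ∈ M then -1 else 0

/-- The coefficient `V_{εJ}(ξ;g)` where `J = P ∪ M`, `ε = +1` on `P` and `-1` on `M`. -/
def Vco (g : ℂ) (ξ : Fin n → ℂ) (P M : Finset (Fin n)) : ℂ :=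
  (∏ j ∈ P ∪ M, (1 / 2 + g + es P M j * ξ j) / (2 * ξ j * (2 * ξ j + es P M j)))
    * (∏ j ∈ P ∪ M, ∏ k ∈ (P ∪ M)ᶜ, (ξ j ^ 2 - ξ k ^ 2)⁻¹)
    * ∏ j ∈ P ∪ M, ∏ j' ∈ (P ∪ M).filter (fun j' => j < j'),
        (es P M j * ξ j + es P M j' * ξ j')⁻¹ * (1 + es P M j * ξ j + es P M j' * ξ j')⁻¹

/-- The coefficient `U_{K,p}(ξ;g)`. -/
def Uco (g : ℂ) (ξ : Fin n → ℂ) (K : Finset (Fin n)) (p : ℕ) : ℂ :=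
  (-1 : ℂ) ^ (p * (p + 1) / 2) *
    ∑ P : Finset (Fin n), ∑ M : Finset (Fin n),
      if P ⊆ K ∧ M ⊆ K ∧ Disjoint P M ∧ P.card + M.card = p then
        (∏ i ∈ P ∪ M, (1 / 2 + g + es P M i * ξ i) / (2 * ξ i * (2 * ξ i + es P M i)))
          * (∏ i ∈ P ∪ M, ∏ k ∈ K \ (P ∪ M), (ξ i ^ 2 - ξ k ^ 2)⁻¹)
          * ∏ i ∈ P ∪ M, ∏ i' ∈ (P ∪ M).filter (fun i' => i < i'),
              (es P M i * ξ i + es P M i' * ξ i')⁻¹ *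
                (1 + es P M i * ξ i + es P M i' * ξ i')⁻¹
      else 0

/-- LHS of the dual difference equation of order `ℓ`, applied to a function `Φf` of the
spectral variable. -/
def diffLHS (g : ℂ) (ℓ : ℕ) (ξ : Fin n → ℂ) (Φf : (Fin n → ℂ) → ℂ) : ℂ :=
  ∑ P : Finset (Fin n), ∑ M : Finset (Fin n),
    if Disjoint P M ∧ P.card + M.card ≤ ℓ then
      Uco g ξ (P ∪ M)ᶜ (ℓ - (P.card + M.card)) * Vco g ξ P M * Φf (ξ + es P M)
    else 0

/-- The set of linear forms `ξ ↦ 2ξ_j`, `ξ ↦ ξ_j ± ξ_k` (`j < k`). -/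
def LinForms (n : ℕ) : Set ((Fin n → ℂ) → ℂ) :=
  {L | (∃ j, L = fun ξ => 2 * ξ j) ∨
    ∃ j k : Fin n, j < k ∧ ((L = fun ξ => ξ j + ξ k) ∨ L = fun ξ => ξ j - ξ k)}

/-- Exponential damping factor `e^{-c·l·⟨α,ρ⟩}`. -/
def damp (n : ℕ) (c : ℝ) (l : ℕ) (α : Fin n → ℤ) : ℂ :=
  Complex.exp (((-(c * (l : ℝ) * ((rp α : ℤ) : ℝ))) : ℝ) : ℂ)

/-- RHS of the (rescaled) Calogero–Sutherland Harish-Chandra recurrence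
`∑_{α ∈ R₊} ∑_{l ≥ 1} l e^{-c l ⟨α,ρ⟩} a^{cs}_α(k) a_{ν - lα}` (a finite sum since the
terms with `l > ⟨ν,ρ⟩` vanish). -/
def csRHS (k : ℂ × ℂ × ℂ) (c : ℝ) (a : (Fin n → ℤ) → ℂ) (ν : Fin n → ℤ) : ℂ :=
  ∑ l ∈ Finset.Icc 1 (rp ν).toNat, (l : ℂ) *
    ((∑ j : Fin n, damp n c l (eZ n (j : ℕ)) * (k.2.1 * (k.2.1 + 2 * k.2.2 - 1)) *
        a (ν - l • eZ n (j : ℕ)))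
      + (∑ j : Fin n, damp n c l (2 • eZ n (j : ℕ)) * (4 * k.2.2 * (k.2.2 - 1)) *
          a (ν - l • (2 • eZ n (j : ℕ))))
      + ∑ j : Fin n, ∑ j' ∈ Finset.Ioi j,
          (damp n c l (eZ n (j : ℕ) + eZ n (j' : ℕ)) * (2 * k.1 * (k.1 - 1)) *
              a (ν - l • (eZ n (j : ℕ) + eZ n (j' : ℕ)))
            + damp n c l (eZ n (j : ℕ) - eZ n (j' : ℕ)) * (2 * k.1 * (k.1 - 1)) *
                a (ν - l • (eZ n (j : ℕ) - eZ n (j' : ℕ)))))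

/-- `a` is the family of Calogero–Sutherland Harish-Chandra coefficients `ν ↦ a^{cs}_ν(ξ;k)`. -/
def IsHCcs (k : ℂ × ℂ × ℂ) (ξ : Fin n → ℂ) (a : (Fin n → ℤ) → ℂ) : Prop :=
  a 0 = 1 ∧ (∀ ν, ¬ dominant ν → a ν = 0) ∧
    ∀ ν, dominant ν → ν ≠ 0 → pc (zc ν - 2 • ξ) (zc ν) * a ν = csRHS k 0 a ν

/-- `a` is the family of rescaled coefficients `ν ↦ â^{cs}_ν(ξ;k)` (with damping `c` and
initial value `Δval`). -/
def IsHCcsResc (k : ℂ × ℂ × ℂ) (c : ℝ) (Δval : ℂ) (ξ : Fin n → ℂ)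
    (a : (Fin n → ℤ) → ℂ) : Prop :=
  a 0 = Δval ∧ (∀ ν, ¬ dominant ν → a ν = 0) ∧
    ∀ ν, dominant ν → ν ≠ 0 → pc (zc ν - 2 • ξ) (zc ν) * a ν = csRHS k c a ν

/-- The open Weyl chamber `𝔸ⁿ = {x ∈ ℝⁿ ∣ x₁ > x₂ > ⋯ > xₙ > 0}`. -/
def Achamber (n : ℕ) : Set (Fin n → ℝ) :=
  {x | (∀ j k : Fin n, j < k → x k < x j) ∧ ∀ j, 0 < x j}

/-- The coupling parameters `k^{(c)} = (k₀^{(c)}, 2g, k₂^{(c)})` with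
`k₀^{(c)}(k₀^{(c)}-1) = e^c`, `k₂^{(c)}(k₂^{(c)}-1) = e^{2c}/16`, `k₀^{(c)}, k₂^{(c)} > 0`. -/
def kParam (g : ℂ) (c : ℝ) : ℂ × ℂ × ℂ :=
  ((((1 + Real.sqrt (1 + 4 * Real.exp c)) / 2 : ℝ) : ℂ), 2 * g,
    (((1 + Real.sqrt (1 + Real.exp c ^ 2 / 4)) / 2 : ℝ) : ℂ))

/-- The Calogero–Sutherland `c`-function `C^{cs}(ξ;k)`. -/
def Ccs (k : ℂ × ℂ × ℂ) (ξ : Fin n → ℂ) : ℂ :=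
  (∏ j, Complex.Gamma (2 * ξ j) * Complex.Gamma (k.2.1 / 2 + ξ j) /
      (Complex.Gamma (k.2.1 + 2 * ξ j) * Complex.Gamma (k.2.1 / 2 + k.2.2 + ξ j))) *
    ∏ j, ∏ k' ∈ Finset.Ioi j,
      Complex.Gamma (ξ j + ξ k') * Complex.Gamma (ξ j - ξ k') /
        (Complex.Gamma (k.1 + ξ j + ξ k') * Complex.Gamma (k.1 + ξ j - ξ k'))

/-- The normalization constant `γ(k)`. -/
def gammaNorm (n : ℕ) (k : ℂ × ℂ × ℂ) : ℂ :=
  Complex.Gamma k.1 ^ (n * (n - 1)) *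
    (Complex.Gamma k.2.1 * Complex.Gamma (k.2.1 / 2 + k.2.2) /
      (Complex.Gamma (k.2.1 / 2) * Complex.Gamma (1 / 2 + k.2.1 / 2))) ^ n


namespace Aux

/-- `w ν : ℕ → ℤ`, extension of `ν` by zero. -/
def w (ν : Fin n → ℤ) (j : ℕ) : ℤ := if h : j < n then ν ⟨j, h⟩ else 0

/-- partial sums -/
def P (ν : Fin n → ℤ) (m : ℕ) : ℤ := ∑ j ∈ Finset.range m, w ν j

lemma w_apply (ν : Fin n → ℤ) (k : Fin n) : w ν (k : ℕ) = ν k := by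
  simp [w, k.isLt]

lemma sum_Iic_eq (ν : Fin n → ℤ) (k : Fin n) :
    ∑ j ∈ Finset.Iic k, ν j = P ν ((k : ℕ) + 1) := by
  classical
  have h1 : ∑ j ∈ Finset.Iic k, ν j = ∑ j : Fin n, if (j : ℕ) < (k : ℕ) + 1 then ν j else 0 := by
    rw [← Finset.sum_filter]
    apply Finset.sum_congr _ (fun _ _ => rfl)
    ext j
    simp only [Finset.mem_Iic, Finset.mem_filter, Finset.mem_univ, true_and, Fin.le_def,
      Nat.lt_succ_iff]
  have h2 : ∑ j : Fin n, (if (j : ℕ) < (k : ℕ) + 1 then ν j else 0)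
      = ∑ j ∈ Finset.range n, (if j < (k : ℕ) + 1 then w ν j else 0) := by
    rw [← Fin.sum_univ_eq_sum_range (fun j => if j < (k : ℕ) + 1 then w ν j else 0) n]
    exact Finset.sum_congr rfl fun j _ => by
      by_cases h : (j : ℕ) < (k : ℕ) + 1 <;> simp [h, w_apply]
  have h3 : ∑ j ∈ Finset.range n, (if j < (k : ℕ) + 1 then w ν j else 0)
      = ∑ j ∈ Finset.range ((k : ℕ) + 1), w ν j := by
    rw [← Finset.sum_subset (Finset.range_subset_range.2 k.isLt)]
    · exact Finset.sum_congr rfl fun j hj => if_pos (Finset.mem_range.1 hj)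
    · intro x hx hx'
      exact if_neg (by simpa using hx')
  rw [h1, h2, h3]; rfl

lemma rp_eq_sum_P (ν : Fin n → ℤ) : rp ν = ∑ m ∈ Finset.range n, P ν (m + 1) := by
  classical
  have h0 : rp ν = ∑ j ∈ Finset.range n, w ν j * ((n : ℤ) - (j : ℤ)) := by
    rw [rp, ← Fin.sum_univ_eq_sum_range (fun j => w ν j * ((n : ℤ) - (j : ℤ))) n]
    exact Finset.sum_congr rfl fun j _ => by rw [w_apply]
  have h1 : ∀ m, P ν (m + 1) = ∑ j ∈ Finset.range n, (if j < m + 1 then w ν j else 0) ∨ True :=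
    fun m => Or.inr trivial
  have key : ∑ m ∈ Finset.range n, P ν (m + 1)
      = ∑ m ∈ Finset.range n, ∑ j ∈ Finset.range n, (if j ≤ m then w ν j else 0) := by
    apply Finset.sum_congr rfl
    intro m hm
    have hm' : m < n := Finset.mem_range.1 hm
    rw [← Finset.sum_filter]
    apply Finset.sum_congr _ (fun _ _ => rfl)
    ext j
    simp only [Finset.mem_range, Finset.mem_filter]
    omega
  rw [key, Finset.sum_comm, h0]
  apply Finset.sum_congr rfl
  intro j hj
  have hjn : j < n := Finset.mem_range.1 hj
  have : ∑ m ∈ Finset.range n, (if j ≤ m then w ν j else 0)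
      = ∑ m ∈ Finset.Ico j n, w ν j := by
    rw [← Finset.sum_filter]
    apply Finset.sum_congr _ (fun _ _ => rfl)
    ext m
    simp only [Finset.mem_range, Finset.mem_filter, Finset.mem_Ico]
    omega
  rw [this, Finset.sum_const, Nat.card_Ico, nsmul_eq_mul, mul_comm]
  congr 1
  push_cast [Nat.cast_sub (le_of_lt hjn)]
  ring

lemma rp_sub (ν α : Fin n → ℤ) : rp (ν - α) = rp ν - rp α := by
  simp [rp, sub_mul, Finset.sum_sub_distrib]

lemma rp_two_smul (ν : Fin n → ℤ) : rp (2 • ν) = 2 * rp ν := by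
  simp [rp, Finset.mul_sum, mul_assoc]

lemma rp_eZ (k : ℕ) (hk : k < n) : rp (eZ n k) = (n : ℤ) - k := by
  classical
  rw [rp]
  rw [Finset.sum_eq_single (⟨k, hk⟩ : Fin n)]
  · simp [eZ]
  · intro b _ hb
    have : (b : ℕ) ≠ k := fun h => hb (Fin.ext h)
    simp [eZ, this]
  · simp

lemma P_nonneg {ν : Fin n → ℤ} (hν : dominant ν) {m : ℕ} (hm : m ≤ n) : 0 ≤ P ν m := by
  cases m with
  | zero => simp [P]
  | succ m =>
      have := hν ⟨m, hm⟩
      rwa [sum_Iic_eq] at this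

lemma dominant_rp_nonneg {ν : Fin n → ℤ} (hν : dominant ν) : 0 ≤ rp ν := by
  rw [rp_eq_sum_P]
  exact Finset.sum_nonneg fun m hm => P_nonneg hν (Finset.mem_range.1 hm)

lemma eq_of_P_eq {ν μ : Fin n → ℤ} (h : ∀ m ≤ n, P ν m = P μ m) : ν = μ := by
  funext k
  have h1 := h ((k : ℕ) + 1) k.isLt
  have h2 := h (k : ℕ) (le_of_lt k.isLt)
  have e1 : P ν ((k:ℕ)+1) = P ν (k:ℕ) + ν k := by
    rw [P, P, Finset.sum_range_succ, w_apply]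
  have e2 : P μ ((k:ℕ)+1) = P μ (k:ℕ) + μ k := by
    rw [P, P, Finset.sum_range_succ, w_apply]
  omega

lemma dominant_eq_zero {ν : Fin n → ℤ} (hν : dominant ν) (h : rp ν = 0) : ν = 0 := by
  have hP : ∀ m ≤ n, P ν m = 0 := by
    rw [rp_eq_sum_P] at h
    intro m hm
    cases m with
    | zero => simp [P]
    | succ m =>
        have := (Finset.sum_eq_zero_iff_of_nonneg
          (fun i hi => P_nonneg hν (Finset.mem_range.1 hi))).1 h m (Finset.mem_range.2 hm)
        exact this
  have : ν = (0 : Fin n → ℤ) := eq_of_P_eq (by intro m hm; rw [hP m hm]; simp [P, w])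
  exact this

lemma dominant_rp_pos {ν : Fin n → ℤ} (hν : dominant ν) (h0 : ν ≠ 0) : 1 ≤ rp ν := by
  rcases lt_or_eq_of_le (dominant_rp_nonneg hν) with h | h
  · exact h
  · exact absurd (dominant_eq_zero hν h.symm) h0

/-- partial sum map, injective -/
lemma T_injective : Function.Injective (fun (ν : Fin n → ℤ) (k : Fin n) => ∑ j ∈ Finset.Iic k, ν j) := by
  intro ν μ h
  apply eq_of_P_eq
  intro m hm
  cases m with
  | zero => simp [P]
  | succ m =>
      have := congrFun h ⟨m, hm⟩
      simp only at this
      rwa [sum_Iic_eq, sum_Iic_eq] at this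

/-- difference vector attached to `x` -/
def dd (n : ℕ) (x : Fin n → ℝ) (m : ℕ) : ℝ :=
  (if h : m < n then x ⟨m, h⟩ else 0) - (if h : m + 1 < n then x ⟨m + 1, h⟩ else 0)

lemma spaced_le_dd {R : ℝ} {x : Fin n → ℝ} (hx : spaced n R x) {m : ℕ} (hm : m < n) :
    R ≤ dd n x m := by
  have := hx ⟨m, hm⟩
  simp only [dd, dif_pos hm]
  simp only at this
  linarith [this]

lemma y_eq_sum_dd (x : Fin n → ℝ) {m : ℕ} (hm : m ≤ n) :
    (if h : m < n then x ⟨m, h⟩ else 0) = ∑ k ∈ Finset.Ico m n, dd n x k := by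
  set y : ℕ → ℝ := fun i => if h : i < n then x ⟨i, h⟩ else 0 with hy
  have t1 : ∑ k ∈ Finset.Ico m n, (y (k + 1) - y k)
      = ∑ k ∈ Finset.range n, (y (k + 1) - y k) - ∑ k ∈ Finset.range m, (y (k + 1) - y k) :=
    Finset.sum_Ico_eq_sub _ hm
  have t2 : ∑ k ∈ Finset.range n, (y (k + 1) - y k) = y n - y 0 := Finset.sum_range_sub y n
  have t3 : ∑ k ∈ Finset.range m, (y (k + 1) - y k) = y m - y 0 := Finset.sum_range_sub y m
  have hd : ∑ k ∈ Finset.Ico m n, dd n x k = -∑ k ∈ Finset.Ico m n, (y (k + 1) - y k) := by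
    rw [← Finset.sum_neg_distrib]
    exact Finset.sum_congr rfl fun k _ => by rw [dd]; ring
  have hyn : y n = 0 := by simp [hy]
  rw [hd, t1, t2, t3, hyn]
  ring

lemma prx_eq (ν : Fin n → ℤ) (x : Fin n → ℝ) :
    ∑ j : Fin n, (ν j : ℝ) * x j = ∑ k ∈ Finset.range n, dd n x k * (P ν (k + 1) : ℝ) := by
  classical
  have h0 : ∑ j : Fin n, (ν j : ℝ) * x j
      = ∑ j ∈ Finset.range n, (w ν j : ℝ) * (if h : j < n then x ⟨j, h⟩ else 0) := by
    rw [← Fin.sum_univ_eq_sum_range (fun j => (w ν j : ℝ) * (if h : j < n then x ⟨j, h⟩ else 0)) n]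
    exact Finset.sum_congr rfl fun j _ => by rw [w_apply]; simp [j.isLt]
  rw [h0]
  have h1 : ∀ j ∈ Finset.range n, (w ν j : ℝ) * (if h : j < n then x ⟨j, h⟩ else 0)
      = ∑ k ∈ Finset.range n, (if j ≤ k then (w ν j : ℝ) * dd n x k else 0) := by
    intro j hj
    have hjn : j < n := Finset.mem_range.1 hj
    rw [y_eq_sum_dd x (le_of_lt hjn), Finset.mul_sum]
    rw [← Finset.sum_filter]
    apply Finset.sum_congr _ (fun _ _ => rfl)
    ext k
    simp only [Finset.mem_filter, Finset.mem_range, Finset.mem_Ico]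
    omega
  rw [Finset.sum_congr rfl h1, Finset.sum_comm]
  apply Finset.sum_congr rfl
  intro k hk
  have hkn : k < n := Finset.mem_range.1 hk
  have h2 : ∑ j ∈ Finset.range n, (if j ≤ k then (w ν j : ℝ) * dd n x k else 0)
      = ∑ j ∈ Finset.range (k + 1), (w ν j : ℝ) * dd n x k := by
    rw [← Finset.sum_filter]
    apply Finset.sum_congr _ (fun _ _ => rfl)
    ext j
    simp only [Finset.mem_filter, Finset.mem_range]
    omega
  rw [h2, ← Finset.sum_mul, mul_comm]
  congr 1
  rw [P]
  push_cast
  rfl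

lemma prx_ge {R : ℝ} {x : Fin n → ℝ} (hx : spaced n R x) {ν : Fin n → ℤ}
    (hν : dominant ν) : R * (rp ν : ℝ) ≤ ∑ j : Fin n, (ν j : ℝ) * x j := by
  rw [prx_eq, rp_eq_sum_P]
  push_cast
  rw [Finset.mul_sum]
  apply Finset.sum_le_sum
  intro k hk
  have hkn : k < n := Finset.mem_range.1 hk
  have hP : (0 : ℝ) ≤ (P ν (k + 1) : ℝ) := by
    exact_mod_cast P_nonneg hν hkn
  exact mul_le_mul_of_nonneg_right (spaced_le_dd hx hkn) hP

lemma pc_norm_ge {ξ : Fin n → ℂ} (hRe : ∀ j, (ξ j).re = 0) {ν : Fin n → ℤ} (h0 : ν ≠ 0) :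
    1 ≤ ‖pc (zc ν - 2 • ξ) (zc ν)‖ := by
  have hre : (pc (zc ν - 2 • ξ) (zc ν)).re = ∑ j, ((ν j : ℝ)) ^ 2 := by
    rw [pc, Complex.re_sum]
    apply Finset.sum_congr rfl
    intro j _
    have : ((2 : ℕ) • ξ) j = 2 * ξ j := by
      simp [Pi.smul_apply, nsmul_eq_mul]
    simp [Pi.sub_apply, this, zc, Complex.mul_re, Complex.sub_re, Complex.sub_im,
      Complex.mul_im, hRe j]
    ring
  obtain ⟨j0, hj0⟩ : ∃ j0, ν j0 ≠ 0 := by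
    by_contra h
    push_neg at h
    exact h0 (funext h)
  have h1 : (1 : ℝ) ≤ ((ν j0 : ℝ)) ^ 2 := by
    have : (1 : ℤ) ≤ (ν j0) ^ 2 := by nlinarith [Int.one_le_abs hj0, sq_abs (ν j0), abs_nonneg (ν j0)]
    exact_mod_cast this
  have h2 : (1 : ℝ) ≤ ∑ j, ((ν j : ℝ)) ^ 2 :=
    le_trans h1 (Finset.single_le_sum (fun i _ => sq_nonneg ((ν i : ℝ))) (Finset.mem_univ j0))
  calc (1 : ℝ) ≤ (pc (zc ν - 2 • ξ) (zc ν)).re := by rw [hre]; exact h2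
  _ ≤ |(pc (zc ν - 2 • ξ) (zc ν)).re| := le_abs_self _
  _ ≤ ‖pc (zc ν - 2 • ξ) (zc ν)‖ := Complex.abs_re_le_norm _

lemma norm_hcTerm_eq {a : (Fin n → ℤ) → ℂ} {ξ : Fin n → ℂ} (hRe : ∀ j, (ξ j).re = 0)
    (x : Fin n → ℝ) (ν : Fin n → ℤ) :
    ‖hcTerm a ξ (cr x) ν‖ = ‖a ν‖ * Real.exp (-∑ j : Fin n, (ν j : ℝ) * x j) := by
  rw [hcTerm, norm_mul]
  congr 1
  rw [Complex.norm_exp]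
  congr 1
  rw [pc, Complex.re_sum, ← Finset.sum_neg_distrib]
  apply Finset.sum_congr rfl
  intro j _
  simp [zc, cr, Complex.mul_re, Complex.sub_re, Complex.sub_im, hRe j]

lemma a_bound (hn : 1 ≤ n) {g : ℂ} {ξ : Fin n → ℂ} {a : (Fin n → ℤ) → ℂ}
    (hH : IsHC g ξ a) (hRe : ∀ j, (ξ j).re = 0) :
    ∀ ν, dominant ν → ‖a ν‖ ≤ (2 * n + ‖g‖ + 1) ^ (rp ν).toNat := by
  set B : ℝ := 2 * n + ‖g‖ + 1 with hB
  have hB1 : (1 : ℝ) ≤ B := by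
    have := norm_nonneg g
    have : (0:ℝ) ≤ 2 * n := by positivity
    simp only [hB]
    nlinarith [norm_nonneg g]
  have hB0 : (0 : ℝ) ≤ B := le_trans zero_le_one hB1
  intro ν hν
  generalize hm : (rp ν).toNat = m
  induction m using Nat.strong_induction_on generalizing ν with
  | _ m ih =>
  by_cases hν0 : ν = 0
  · subst hν0
    have : rp (0 : Fin n → ℤ) = 0 := by simp [rp]
    rw [this] at hm
    simp only [Int.toNat_zero] at hm
    rw [← hm, hH.1]
    simp
  · have hrp1 : 1 ≤ rp ν := dominant_rp_pos hν hν0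
    have hm1 : 1 ≤ m := by omega
    have key : ∀ μ : Fin n → ℤ, rp μ ≤ rp ν - 1 → ‖a μ‖ ≤ B ^ (m - 1) := by
      intro μ hμ
      by_cases hd : dominant μ
      · have h0 := dominant_rp_nonneg hd
        have hlt : (rp μ).toNat < m := by omega
        refine le_trans (ih (rp μ).toNat hlt μ hd rfl) (pow_le_pow_right₀ hB1 ?_)
        omega
      · rw [hH.2.1 μ hd, norm_zero]
        positivity
    have hrpβ : ∀ k ∈ Finset.range (n - 1), rp (ν - (eZ n k - eZ n (k + 1))) ≤ rp ν - 1 := by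
      intro k hk
      have hk' : k + 1 < n := by have := Finset.mem_range.1 hk; omega
      rw [rp_sub, rp_sub, rp_eZ k (by omega), rp_eZ (k + 1) hk']
      push_cast
      omega
    have hrpe : rp (ν - eZ n (n - 1)) ≤ rp ν - 1 := by
      rw [rp_sub, rp_eZ (n - 1) (by omega)]
      omega
    have hrpe2 : rp (ν - 2 • eZ n (n - 1)) ≤ rp ν - 1 := by
      rw [rp_sub, rp_two_smul, rp_eZ (n - 1) (by omega)]
      omega
    rw [hH.2.2 ν hν hν0, norm_mul]
    have hinv : ‖(pc (zc ν - 2 • ξ) (zc ν))⁻¹‖ ≤ 1 := by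
      rw [norm_inv]
      exact inv_le_one_of_one_le₀ (pc_norm_ge hRe hν0)
    have hsum : ‖∑ k ∈ Finset.range (n - 1), 2 * a (ν - (eZ n k - eZ n (k + 1)))‖
        ≤ (n - 1 : ℕ) * (2 * B ^ (m - 1)) := by
      refine le_trans (norm_sum_le _ _) ?_
      refine le_trans (Finset.sum_le_sum (g := fun _ => 2 * B ^ (m - 1)) ?_) ?_
      · intro k hk
        rw [norm_mul, Complex.norm_ofNat]
        exact mul_le_mul_of_nonneg_left (key _ (hrpβ k hk)) (by norm_num)
      · rw [Finset.sum_const, Finset.card_range, nsmul_eq_mul]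
    have hge : ‖g * a (ν - eZ n (n - 1))‖ ≤ ‖g‖ * B ^ (m - 1) := by
      rw [norm_mul]
      exact mul_le_mul_of_nonneg_left (key _ hrpe) (norm_nonneg g)
    have h2e : ‖(1 / 4 : ℂ) * a (ν - 2 • eZ n (n - 1))‖ ≤ (1 / 4 : ℝ) * B ^ (m - 1) := by
      rw [norm_mul]
      refine mul_le_mul ?_ (key _ hrpe2) (norm_nonneg _) (by norm_num)
      norm_num
    have hRHS : ‖todaRHS g a ν‖ ≤ B * B ^ (m - 1) := by
      rw [todaRHS]
      refine le_trans (norm_add_le _ _) ?_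
      refine le_trans (add_le_add (le_trans (norm_add_le _ _) (add_le_add hsum hge)) h2e) ?_
      have hc : ((n - 1 : ℕ) : ℝ) * 2 + ‖g‖ + 1 / 4 ≤ B := by
        have : ((n - 1 : ℕ) : ℝ) ≤ (n : ℝ) := by exact_mod_cast Nat.cast_le.2 (Nat.sub_le n 1)
        simp only [hB]
        nlinarith
      nlinarith [pow_nonneg hB0 (m - 1), norm_nonneg g]
    calc ‖(pc (zc ν - 2 • ξ) (zc ν))⁻¹‖ * ‖todaRHS g a ν‖ ≤ 1 * (B * B ^ (m - 1)) :=
          mul_le_mul hinv hRHS (norm_nonneg _) zero_le_one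
    _ = B ^ m := by
          rw [one_mul, ← pow_succ']
          congr 1
          omega

/-- one-dimensional geometric-type function -/
def h1d (q : ℝ) (s : ℤ) : ℝ := if 0 ≤ s then q ^ s.toNat else 0

instance decDominant (ν : Fin n → ℤ) : Decidable (dominant ν) := by
  unfold dominant; infer_instance

lemma h1d_nonneg {q : ℝ} (h0 : 0 ≤ q) (s : ℤ) : 0 ≤ h1d q s := by
  unfold h1d; split_ifs; · positivity
  · exact le_rfl

lemma summable_h1d {q : ℝ} (h0 : 0 ≤ q) (h1 : q < 1) : Summable (h1d q) := by
  apply Summable.of_nat_of_neg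
  · apply (summable_geometric_of_lt_one h0 h1).congr
    intro m
    simp [h1d, Int.toNat_natCast]
  · refine Summable.of_nonneg_of_le (fun m => h1d_nonneg h0 _) (fun m => ?_)
      (summable_geometric_of_lt_one h0 h1)
    unfold h1d
    split_ifs with h
    · have hm : m = 0 := by omega
      subst hm; simp
    · positivity

set_option maxHeartbeats 1000000 in
lemma summable_pi_prod {q : ℝ} (h0 : 0 ≤ q) (h1 : q < 1) (m : ℕ) :
    Summable (fun S : Fin m → ℤ => ∏ k, h1d q (S k)) := by
  induction m with
  | zero => exact Summable.of_finite
  | succ m ihm =>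
      have hp : Summable (fun p : ℤ × (Fin m → ℤ) => h1d q p.1 * ∏ k, h1d q (p.2 k)) :=
        Summable.mul_of_nonneg (f := h1d q) (g := fun S : Fin m → ℤ => ∏ k, h1d q (S k))
          (summable_h1d h0 h1) ihm (fun s => h1d_nonneg h0 s)
          (fun S => Finset.prod_nonneg fun k _ => h1d_nonneg h0 _)
      have := ((Fin.consEquiv (fun _ : Fin (m + 1) => ℤ)).symm.summable_iff
        (f := fun p : ℤ × (Fin m → ℤ) => h1d q p.1 * ∏ k, h1d q (p.2 k))).2 hp
      apply this.congr
      intro S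
      show h1d q ((Fin.consEquiv (fun _ : Fin (m + 1) => ℤ)).symm S).1 * ∏ k, h1d q (((Fin.consEquiv (fun _ : Fin (m + 1) => ℤ)).symm S).2 k)
          = ∏ k, h1d q (S k)
      rw [Fin.prod_univ_succ (f := fun k => h1d q (S k))]
      rfl

lemma rp_toNat_eq {ν : Fin n → ℤ} (hν : dominant ν) :
    (rp ν).toNat = ∑ k : Fin n, (∑ j ∈ Finset.Iic k, ν j).toNat := by
  have h1 : rp ν = ∑ k : Fin n, ∑ j ∈ Finset.Iic k, ν j := by
    rw [rp_eq_sum_P, ← Fin.sum_univ_eq_sum_range (fun m => P ν (m + 1)) n]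
    exact (Finset.sum_congr rfl fun k _ => (sum_Iic_eq ν k)).symm
  have h2 : rp ν = ((∑ k : Fin n, (∑ j ∈ Finset.Iic k, ν j).toNat : ℕ) : ℤ) := by
    rw [h1]
    push_cast
    exact Finset.sum_congr rfl fun k _ => (Int.toNat_of_nonneg (hν k)).symm
  rw [h2, Int.toNat_natCast]

lemma summable_W {q : ℝ} (h0 : 0 ≤ q) (h1 : q < 1) :
    Summable (fun ν : Fin n → ℤ => if dominant ν then q ^ (rp ν).toNat else 0) := by
  classical
  set T : (Fin n → ℤ) → (Fin n → ℤ) := fun ν k => ∑ j ∈ Finset.Iic k, ν j with hT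
  have hcomp : Summable ((fun S : Fin n → ℤ => ∏ k, h1d q (S k)) ∘ T) :=
    (summable_pi_prod h0 h1 n).comp_injective T_injective
  apply Summable.of_nonneg_of_le (g := fun ν => if dominant ν then q ^ (rp ν).toNat else 0)
    (f := (fun S : Fin n → ℤ => ∏ k, h1d q (S k)) ∘ T)
  · intro ν
    split_ifs
    · positivity
    · exact le_rfl
  · intro ν
    by_cases hd : dominant ν
    · rw [if_pos hd]
      have : ((fun S : Fin n → ℤ => ∏ k, h1d q (S k)) ∘ T) ν = ∏ k, q ^ (T ν k).toNat := by
        simp only [Function.comp]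
        refine Finset.prod_congr rfl fun k _ => ?_
        unfold h1d
        rw [if_pos (hd k)]
      rw [this, Finset.prod_pow_eq_pow_sum, rp_toNat_eq hd]
    · rw [if_neg hd]
      exact Finset.prod_nonneg fun k _ => h1d_nonneg h0 _
  · exact hcomp

end Aux

/-- Plane-wave asymptotics of the fundamental Whittaker function for purely imaginary
spectral parameter. -/
theorem statement2 (n : ℕ) (hn : 1 ≤ n)
    (a : (Fin n → ℂ) → ℂ → (Fin n → ℤ) → ℂ)
    (ha : ∀ ξ ∈ Uset n, ∀ g : ℂ, IsHC g ξ (a ξ g))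
    (ξ : Fin n → ℂ) (hξ : ξ ∈ Uset n) (hRe : ∀ j, (ξ j).re = 0) (g : ℂ) :
    ∀ ε : ℝ, 0 < ε → ∃ R : ℝ, 0 < R ∧ ∀ x : Fin n → ℝ, spaced n R x →
      ‖(∑' ν : Fin n → ℤ, hcTerm (a ξ g) ξ (cr x) ν) - Complex.exp (pc ξ (cr x))‖ < ε := by
  classical
  intro ε hε
  obtain ⟨H1, H2, H3⟩ := ha ξ hξ g
  have habd := Aux.a_bound hn (ha ξ hξ g) hRe
  set W : (Fin n → ℤ) → ℝ := fun ν => if dominant ν then (1 / 2 : ℝ) ^ (rp ν).toNat else 0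
    with hW
  have hWsum : Summable W := Aux.summable_W (by norm_num) (by norm_num)
  have hWnn : ∀ ν, 0 ≤ W ν := by
    intro ν
    simp only [hW]
    split_ifs
    · positivity
    · exact le_rfl
  set K : ℝ := ∑' ν, W ν with hK
  have hK0 : 0 ≤ K := tsum_nonneg hWnn
  set B : ℝ := 2 * n + ‖g‖ + 1 with hB
  have hB1 : (1 : ℝ) ≤ B := by
    have h2 : (0 : ℝ) ≤ 2 * n := by positivity
    simp only [hB]
    nlinarith [norm_nonneg g]
  have hB0 : (0 : ℝ) < B := lt_of_lt_of_le one_pos hB1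
  set δ : ℝ := min (1 / (2 * B)) (ε / (4 * B * (K + 1))) with hδ
  have hδ0 : 0 < δ := by
    apply lt_min
    · positivity
    · positivity
  set R : ℝ := max 1 (Real.log (1 / δ)) with hR
  refine ⟨R, lt_of_lt_of_le one_pos (le_max_left _ _), ?_⟩
  intro x hx
  set r : ℝ := B * Real.exp (-R) with hr
  have hr0 : 0 < r := by positivity
  have hexp : Real.exp (-R) ≤ δ := by
    have hRlog : Real.log (1 / δ) ≤ R := le_max_right _ _
    rw [one_div, Real.log_inv] at hRlog
    rw [← Real.exp_log hδ0]
    apply Real.exp_le_exp.2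
    linarith
  have hrδ : r ≤ B * δ := by
    rw [hr]
    exact mul_le_mul_of_nonneg_left hexp hB0.le
  have hrhalf : r ≤ 1 / 2 := by
    refine le_trans hrδ ?_
    have h1 : δ ≤ 1 / (2 * B) := min_le_left _ _
    calc B * δ ≤ B * (1 / (2 * B)) := mul_le_mul_of_nonneg_left h1 hB0.le
    _ = 1 / 2 := by
          rw [mul_one_div, mul_comm 2 B, ← div_div, div_self hB0.ne']
  -- term bounds
  have hterm : ∀ ν, ‖hcTerm (a ξ g) ξ (cr x) ν‖
      ≤ (if dominant ν then r ^ (rp ν).toNat else 0) := by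
    intro ν
    by_cases hd : dominant ν
    · rw [Aux.norm_hcTerm_eq hRe, if_pos hd]
      have h1 : ‖a ξ g ν‖ ≤ B ^ (rp ν).toNat := habd ν hd
      have h2 : Real.exp (-∑ j : Fin n, (ν j : ℝ) * x j)
          ≤ Real.exp (-R) ^ (rp ν).toNat := by
        rw [← Real.exp_nat_mul]
        apply Real.exp_le_exp.2
        have h3 := Aux.prx_ge hx hd
        have h4 : ((rp ν).toNat : ℝ) = ((rp ν : ℤ) : ℝ) := by
          exact_mod_cast congrArg (fun z : ℤ => (z : ℝ))
            (Int.toNat_of_nonneg (Aux.dominant_rp_nonneg hd))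
        rw [h4]
        nlinarith
      calc ‖a ξ g ν‖ * Real.exp (-∑ j : Fin n, (ν j : ℝ) * x j)
          ≤ B ^ (rp ν).toNat * Real.exp (-R) ^ (rp ν).toNat :=
            mul_le_mul h1 h2 (Real.exp_pos _).le (by positivity)
      _ = r ^ (rp ν).toNat := by rw [hr, mul_pow]
    · rw [Aux.norm_hcTerm_eq hRe, H2 ν hd, norm_zero, zero_mul, if_neg hd]
  have hnorm : Summable (fun ν => ‖hcTerm (a ξ g) ξ (cr x) ν‖) := by
    refine Summable.of_nonneg_of_le (fun ν => norm_nonneg _) (fun ν => ?_) hWsum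
    refine le_trans (hterm ν) ?_
    simp only [hW]
    split_ifs
    · exact pow_le_pow_left₀ hr0.le hrhalf _
    · exact le_rfl
  have hsumm : Summable (fun ν => hcTerm (a ξ g) ξ (cr x) ν) := by
    exact Summable.of_norm hnorm
  have h00 : hcTerm (a ξ g) ξ (cr x) 0 = Complex.exp (pc ξ (cr x)) := by
    rw [hcTerm, H1, one_mul]
    congr 2
    funext j
    simp [zc]
  rw [Summable.tsum_eq_add_tsum_ite hsumm 0, h00, add_sub_cancel_left]
  have hb2 : ∀ ν, ‖(if ν = (0 : Fin n → ℤ) then (0 : ℂ) else hcTerm (a ξ g) ξ (cr x) ν)‖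
      ≤ 2 * r * W ν := by
    intro ν
    by_cases h : ν = 0
    · rw [if_pos h, norm_zero]
      have := hWnn ν
      positivity
    · rw [if_neg h]
      refine le_trans (hterm ν) ?_
      by_cases hd : dominant ν
      · rw [if_pos hd]
        simp only [hW]
        rw [if_pos hd]
        set m : ℕ := (rp ν).toNat with hm
        have hm1 : 1 ≤ m := by
          have := Aux.dominant_rp_pos hd h
          omega
        have e1 : r ^ m = r * r ^ (m - 1) := by
          rw [← pow_succ']
          congr 1
          omega
        have e2 : (1 / 2 : ℝ) ^ m = (1 / 2) * (1 / 2) ^ (m - 1) := by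
          rw [← pow_succ']
          congr 1
          omega
        rw [e1, e2]
        have h5 : r ^ (m - 1) ≤ (1 / 2 : ℝ) ^ (m - 1) := pow_le_pow_left₀ hr0.le hrhalf _
        have h6 : (0:ℝ) ≤ (1/2:ℝ) ^ (m-1) := by positivity
        nlinarith
      · rw [if_neg hd]
        simp only [hW]
        rw [if_neg hd]
        positivity
  have hsum2 : Summable (fun ν => (if ν = (0 : Fin n → ℤ) then (0 : ℂ)
      else hcTerm (a ξ g) ξ (cr x) ν)) := by
    apply Summable.of_norm
    refine Summable.of_nonneg_of_le (fun ν => norm_nonneg _) (fun ν => ?_) hnorm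
    by_cases h : ν = 0
    · rw [if_pos h, norm_zero]
      exact norm_nonneg _
    · rw [if_neg h]
  calc ‖∑' ν, (if ν = (0 : Fin n → ℤ) then (0 : ℂ) else hcTerm (a ξ g) ξ (cr x) ν)‖
      ≤ ∑' ν, ‖(if ν = (0 : Fin n → ℤ) then (0 : ℂ) else hcTerm (a ξ g) ξ (cr x) ν)‖ :=
        norm_tsum_le_tsum_norm (hsum2.norm)
  _ ≤ ∑' ν, 2 * r * W ν := Summable.tsum_le_tsum hb2 hsum2.norm (hWsum.mul_left _)
  _ = 2 * r * K := by rw [tsum_mul_left, hK]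
  _ < ε := by
      have h1 : δ ≤ ε / (4 * B * (K + 1)) := min_le_right _ _
      have h2 : 2 * r * K ≤ 2 * (B * δ) * (K + 1) := by
        nlinarith [mul_nonneg (sub_nonneg.2 hrδ) hK0, mul_nonneg hB0.le hδ0.le]
      have h3 : 2 * (B * δ) * (K + 1) ≤ 2 * (B * (ε / (4 * B * (K + 1)))) * (K + 1) := by
        nlinarith [mul_nonneg (mul_nonneg hB0.le (sub_nonneg.2 h1))
          (by linarith : (0:ℝ) ≤ K + 1)]
      have h4 : 2 * (B * (ε / (4 * B * (K + 1)))) * (K + 1) = ε / 2 := by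
        field_simp
        ring
      calc 2 * r * K ≤ 2 * (B * δ) * (K + 1) := h2
      _ ≤ 2 * (B * (ε / (4 * B * (K + 1)))) * (K + 1) := h3
      _ = ε / 2 := h4
      _ < ε := by linarith

end TodaBC
end
end

section
/- For every compact subset K of 𝕌ⁿ there exists a constant a > 0 such that |⟨ν−2ξ,ν⟩| ≥ a·⟨ν,ρ⟩² for all ξ ∈ K and all ν ∈ ℤⁿ with ν ≥ 0. -/
open scoped BigOperators
open Finset Filter Topology

noncomputable section

namespace TodaBC

variable {n : ℕ}

lemma rp_eq_sum (ν : Fin n → ℤ) : rp ν = ∑ k : Fin n, ∑ j ∈ Finset.Iic k, ν j := by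
  calc rp ν = ∑ j : Fin n, ∑ _k ∈ Finset.Ici j, ν j := by
        unfold rp
        refine Finset.sum_congr rfl fun j _ => ?_
        rw [Finset.sum_const, Fin.card_Ici, nsmul_eq_mul]
        have hj : (j : ℕ) ≤ n := j.isLt.le
        rw [Nat.cast_sub hj]
        ring
    _ = ∑ k : Fin n, ∑ j ∈ Finset.Iic k, ν j :=
        Finset.sum_comm' (by intro j k; simp [Finset.mem_Ici, Finset.mem_Iic])

lemma rp_nonneg {ν : Fin n → ℤ} (hν : dominant ν) : 0 ≤ rp ν := by
  rw [rp_eq_sum]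
  exact Finset.sum_nonneg fun k _ => hν k

lemma Iic_sum_le_rp {ν : Fin n → ℤ} (hν : dominant ν) (k : Fin n) :
    ∑ j ∈ Finset.Iic k, ν j ≤ rp ν := by
  rw [rp_eq_sum]
  exact Finset.single_le_sum (fun i _ => hν i) (Finset.mem_univ k)

lemma Iio_sum_bounds {ν : Fin n → ℤ} (hν : dominant ν) (j : Fin n) :
    0 ≤ ∑ k ∈ Finset.Iio j, ν k ∧ ∑ k ∈ Finset.Iio j, ν k ≤ rp ν := by
  rcases j with ⟨m, hm⟩
  cases m with
  | zero =>
    have h : Finset.Iio (⟨0, hm⟩ : Fin n) = ∅ := by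
      ext k; simp [Fin.lt_def]
    rw [h]
    simpa using rp_nonneg hν
  | succ m =>
    have h : Finset.Iio (⟨m + 1, hm⟩ : Fin n)
        = Finset.Iic (⟨m, Nat.lt_of_succ_lt hm⟩ : Fin n) := by
      ext k; simp [Fin.lt_def, Fin.le_def, Nat.lt_succ_iff]
    rw [h]
    exact ⟨hν _, Iic_sum_le_rp hν _⟩

lemma nu_eq_split {ν : Fin n → ℤ} (j : Fin n) :
    ∑ k ∈ Finset.Iic j, ν k = ν j + ∑ k ∈ Finset.Iio j, ν k := by
  rw [← Finset.Iio_insert, Finset.sum_insert (by simp)]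

lemma abs_nu_le_rp {ν : Fin n → ℤ} (hν : dominant ν) (j : Fin n) : |ν j| ≤ rp ν := by
  have h1 := hν j
  have h2 := Iic_sum_le_rp hν j
  have h3 := Iio_sum_bounds hν j
  have h4 := nu_eq_split (ν := ν) j
  rw [abs_le]
  constructor <;> linarith [h3.1, h3.2]

lemma one_le_rp {ν : Fin n → ℤ} (hν : dominant ν) (h0 : ν ≠ 0) : 1 ≤ rp ν := by
  by_contra h
  push_neg at h
  have hz : rp ν = 0 := le_antisymm (by omega) (rp_nonneg hν)
  apply h0
  funext j
  have := abs_nu_le_rp hν j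
  rw [hz, abs_le] at this
  show ν j = 0
  omega

lemma rp_le_n_mul_absSum (ν : Fin n → ℤ) : rp ν ≤ (n : ℤ) * ∑ j, |ν j| := by
  calc rp ν ≤ |rp ν| := le_abs_self _
    _ ≤ ∑ j, |ν j * ((n : ℤ) - ((j : ℕ) : ℤ))| := Finset.abs_sum_le_sum_abs _ _
    _ ≤ ∑ j : Fin n, (n : ℤ) * |ν j| := by
        refine Finset.sum_le_sum fun j _ => ?_
        rw [abs_mul, mul_comm]
        refine mul_le_mul_of_nonneg_right ?_ (abs_nonneg _)
        have hj : (0 : ℤ) ≤ (j : ℕ) := Int.ofNat_nonneg _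
        have hj2 : ((j : ℕ) : ℤ) < n := by exact_mod_cast j.isLt
        rw [abs_le]
        constructor <;> omega
    _ = (n : ℤ) * ∑ j, |ν j| := by rw [Finset.mul_sum]

/-- On every compact `K ⊆ 𝕌ⁿ` there is a uniform lower bound
`|⟨ν-2ξ,ν⟩| ≥ a ⟨ν,ρ⟩²` for all `ν ≥ 0`. -/
theorem statement9 (n : ℕ) (hn : 1 ≤ n)
    (K : Set (Fin n → ℂ)) (hK : IsCompact K) (hKU : K ⊆ Uset n) :
    ∃ a : ℝ, 0 < a ∧ ∀ ξ ∈ K, ∀ ν : Fin n → ℤ, dominant ν →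
      a * ((rp ν : ℝ)) ^ 2 ≤ ‖pc (zc ν - 2 • ξ) (zc ν)‖ := by
  classical
  have hn0 : (0 : ℝ) < (n : ℝ) := by exact_mod_cast hn
  rcases K.eq_empty_or_nonempty with hKe | hKne
  · exact ⟨1, one_pos, by simp [hKe]⟩
  obtain ⟨R, hR⟩ := hK.isBounded.subset_closedBall 0
  set C : ℝ := max R 0 with hC
  have hC0 : 0 ≤ C := le_max_right _ _
  have hCb : ∀ ξ ∈ K, ∀ j, ‖ξ j‖ ≤ C := by
    intro ξ hξ j
    have h := hR hξ
    rw [Metric.mem_closedBall, dist_zero_right] at h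
    exact le_trans (norm_le_pi_norm ξ j) (le_trans h (le_max_left _ _))
  set N : ℝ := 4 * C * (n : ℝ) ^ 4 + 1 with hN
  -- real-part lower bound on the pairing
  have key : ∀ ξ ∈ K, ∀ ν : Fin n → ℤ,
      (∑ j, ((ν j : ℝ)) ^ 2) - 2 * C * (∑ j, |(ν j : ℝ)|)
        ≤ ‖pc (zc ν - 2 • ξ) (zc ν)‖ := by
    intro ξ hξ ν
    have hterm : ∀ j : Fin n, (((zc ν - 2 • ξ) j) * (zc ν j)).re
        = ((ν j : ℝ)) ^ 2 - 2 * (ξ j).re * (ν j : ℝ) := by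
      intro j
      simp [zc, Pi.sub_apply, Pi.smul_apply, smul_eq_mul, Complex.sub_re,
        Complex.mul_re, Complex.mul_im]
      ring
    have hre : (pc (zc ν - 2 • ξ) (zc ν)).re
        = ∑ j, (((ν j : ℝ)) ^ 2 - 2 * (ξ j).re * (ν j : ℝ)) := by
      rw [pc, Complex.re_sum]
      exact Finset.sum_congr rfl fun j _ => hterm j
    have h1 : (∑ j, ((ν j : ℝ)) ^ 2) - 2 * C * (∑ j, |(ν j : ℝ)|)
        ≤ (pc (zc ν - 2 • ξ) (zc ν)).re := by
      rw [hre, Finset.mul_sum, ← Finset.sum_sub_distrib]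
      refine Finset.sum_le_sum fun j _ => ?_
      have hj : |(ξ j).re| ≤ C := by
        refine le_trans (Complex.abs_re_le_norm _) ?_
        exact hCb ξ hξ j
      have h2 : (ξ j).re * (ν j : ℝ) ≤ C * |(ν j : ℝ)| := by
        calc (ξ j).re * (ν j : ℝ) ≤ |(ξ j).re * (ν j : ℝ)| := le_abs_self _
          _ = |(ξ j).re| * |(ν j : ℝ)| := abs_mul _ _
          _ ≤ C * |(ν j : ℝ)| := mul_le_mul_of_nonneg_right hj (abs_nonneg _)
      linarith
    refine le_trans h1 (le_trans (Complex.re_le_norm _) ?_)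
    exact le_rfl
  -- the finite exceptional set
  set M : ℤ := ⌈N⌉ with hM
  set T : Set (Fin n → ℤ) := {ν | dominant ν ∧ ν ≠ 0 ∧ ((rp ν : ℤ) : ℝ) < N} with hT
  have hTfin : T.Finite := by
    refine (Set.Finite.pi (fun _ : Fin n => Set.finite_Icc (-M) M)).subset ?_
    intro ν hν
    rw [Set.mem_univ_pi]
    intro j
    have h1 := abs_nu_le_rp hν.1 j
    have h2 : (rp ν : ℝ) < ((M : ℤ) : ℝ) := lt_of_lt_of_le hν.2.2 (Int.le_ceil N)
    have h3 : rp ν ≤ M := by exact_mod_cast h2.le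
    have := abs_le.mp (le_trans h1 h3)
    exact Set.mem_Icc.mpr this
  -- per-ν minima on K
  have hmin : ∀ ν : Fin n → ℤ, ∃ m : ℝ,
      ν ∈ T → 0 < m ∧ ∀ ξ ∈ K, m ≤ ‖pc (zc ν - 2 • ξ) (zc ν)‖ := by
    intro ν
    by_cases hν : ν ∈ T
    · have hcont : ContinuousOn (fun ξ : Fin n → ℂ => ‖pc (zc ν - 2 • ξ) (zc ν)‖) K := by
        apply Continuous.continuousOn
        apply Continuous.norm
        unfold pc zc
        simp only [Pi.sub_apply, Pi.smul_apply, smul_eq_mul]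
        fun_prop
      obtain ⟨ξ0, hξ0K, hξ0⟩ := hK.exists_isMinOn hKne hcont
      refine ⟨‖pc (zc ν - 2 • ξ0) (zc ν)‖, fun _ => ⟨?_, fun ξ hξ => hξ0 hξ⟩⟩
      exact norm_pos_iff.mpr (hKU hξ0K ν hν.1 hν.2.1)
    · exact ⟨1, fun h => absurd h hν⟩
  choose m hm using hmin
  set F : Finset (Fin n → ℤ) := hTfin.toFinset with hF
  set G : Finset ℝ := insert 1 (F.image fun ν => m ν / ((rp ν : ℤ) : ℝ) ^ 2) with hG
  have hGne : G.Nonempty := ⟨1, Finset.mem_insert_self _ _⟩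
  refine ⟨min (1 / (2 * (n : ℝ) ^ 3)) (G.min' hGne), lt_min (by positivity) ?_, ?_⟩
  · have hmem := G.min'_mem hGne
    rcases Finset.mem_insert.mp hmem with h | h
    · rw [h]; norm_num
    · obtain ⟨ν, hνF, hνe⟩ := Finset.mem_image.mp h
      have hνT : ν ∈ T := (Set.Finite.mem_toFinset hTfin).mp hνF
      have hmν := (hm ν hνT).1
      have hr1 : (1 : ℝ) ≤ ((rp ν : ℤ) : ℝ) := by
        exact_mod_cast one_le_rp hνT.1 hνT.2.1
      rw [← hνe]
      exact div_pos hmν (by nlinarith)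
  · intro ξ hξ ν hdom
    by_cases h0 : ν = 0
    · subst h0
      have : rp (fun _ : Fin n => (0:ℤ)) = 0 := by simp [rp]
      rw [show (0 : Fin n → ℤ) = (fun _ : Fin n => (0:ℤ)) from rfl] at *
      rw [this]
      simp only [Int.cast_zero, ne_eq, OfNat.ofNat_ne_zero, not_false_eq_true, zero_pow, mul_zero]; exact norm_nonneg _
    set r : ℝ := ((rp ν : ℤ) : ℝ) with hr
    have hr1 : (1 : ℝ) ≤ r := by rw [hr]; exact_mod_cast one_le_rp hdom h0
    have hr0 : (0 : ℝ) ≤ r := by linarith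
    by_cases hbig : N ≤ r
    · -- large case
      set S : ℝ := ∑ j, ((ν j : ℝ)) ^ 2 with hS
      set A : ℝ := ∑ j, |(ν j : ℝ)| with hA
      have hA0 : 0 ≤ A := Finset.sum_nonneg fun j _ => abs_nonneg _
      have hAr : A ≤ (n : ℝ) * r := by
        rw [hA, hr]
        calc (∑ j, |(ν j : ℝ)|) ≤ ∑ _j : Fin n, ((rp ν : ℤ) : ℝ) := by
              refine Finset.sum_le_sum fun j _ => ?_
              rw [← Int.cast_abs]
              exact_mod_cast abs_nu_le_rp hdom j
          _ = (n : ℝ) * ((rp ν : ℤ) : ℝ) := by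
              rw [Finset.sum_const, Finset.card_univ, Fintype.card_fin, nsmul_eq_mul]
      have hrA : r ≤ (n : ℝ) * A := by
        rw [hr, hA]
        exact_mod_cast rp_le_n_mul_absSum ν
      have hAS : A ^ 2 ≤ (n : ℝ) * S := by
        rw [hA, hS]
        have := sq_sum_le_card_mul_sum_sq (s := (Finset.univ : Finset (Fin n)))
          (f := fun j => |(ν j : ℝ)|)
        simp only [Finset.card_univ, Fintype.card_fin, sq_abs] at this
        exact_mod_cast this
      have h2 : r ^ 2 ≤ (n : ℝ) ^ 3 * S := by
        nlinarith [mul_le_mul hrA hrA hr0 (by positivity : (0:ℝ) ≤ (n:ℝ) * A),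
          mul_le_mul_of_nonneg_left hAS (by positivity : (0:ℝ) ≤ (n:ℝ) ^ 2)]
      have h2n3 : (0 : ℝ) < 2 * (n : ℝ) ^ 3 := by positivity
      have hgoal : (1 / (2 * (n : ℝ) ^ 3)) * r ^ 2 ≤ S - 2 * C * A := by
        rw [one_div, inv_mul_le_iff₀ h2n3]
        have h3 : 4 * (n : ℝ) ^ 3 * C * A ≤ 4 * (n : ℝ) ^ 4 * C * r := by
          nlinarith [mul_le_mul_of_nonneg_left hAr
            (by positivity : (0:ℝ) ≤ 4 * (n : ℝ) ^ 3 * C)]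
        have h5 : 4 * C * (n : ℝ) ^ 4 + 1 ≤ r := hN ▸ hbig
        have h4 : 4 * (n : ℝ) ^ 4 * C * r ≤ (r - 1) * r := by
          nlinarith [mul_le_mul_of_nonneg_right
            (show 4 * C * (n : ℝ) ^ 4 ≤ r - 1 by linarith) hr0]
        nlinarith [h2, h3, h4]
      calc min (1 / (2 * (n : ℝ) ^ 3)) (G.min' hGne) * r ^ 2
          ≤ (1 / (2 * (n : ℝ) ^ 3)) * r ^ 2 :=
            mul_le_mul_of_nonneg_right (min_le_left _ _) (by positivity)
        _ ≤ S - 2 * C * A := hgoal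
        _ ≤ ‖pc (zc ν - 2 • ξ) (zc ν)‖ := key ξ hξ ν
    · -- small case
      push_neg at hbig
      have hνT : ν ∈ T := ⟨hdom, h0, hbig⟩
      have hνF : ν ∈ F := (Set.Finite.mem_toFinset hTfin).mpr hνT
      have hmem : m ν / r ^ 2 ∈ G :=
        Finset.mem_insert_of_mem (Finset.mem_image_of_mem _ hνF)
      have hle : G.min' hGne ≤ m ν / r ^ 2 := Finset.min'_le _ _ hmem
      have hrpos : (0 : ℝ) < r ^ 2 := by nlinarith
      calc min (1 / (2 * (n : ℝ) ^ 3)) (G.min' hGne) * r ^ 2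
          ≤ (m ν / r ^ 2) * r ^ 2 :=
            mul_le_mul_of_nonneg_right (le_trans (min_le_right _ _) hle) hrpos.le
        _ = m ν := div_mul_cancel₀ _ (ne_of_gt hrpos)
        _ ≤ ‖pc (zc ν - 2 • ξ) (zc ν)‖ := (hm ν hνT).2 ξ hξ

end TodaBC
end
end
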